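/- With the notation of the UCFG/HMM setup, the vectors β_{G,A'}^{(L)} := Σ_{w ∈ Σ^L} β_G(w) ⊗ vec(A'_w) satisfy the recursion: β_{G,A'}^{(1)} = Σ_{σ∈Σ} β_σ ⊗ vec(A'_σ), and for L ≥ 2, β_{G,A'}^{(L)} = (M ⊗ T)₁ · P · Σ_{i=1}^{L−1} β_{G,A'}^{(i)} ⊗ β_{G,A'}^{(L−i)}, where P is the permutation matrix sending e_i^{(n)} ⊗ e_j^{(n'²)} ⊗ e_k^{(n)} ⊗ e_l^{(n'²)} to e_i^{(n)} ⊗ e_k^{(n)} ⊗ e_j^{(n'²)} ⊗ e_l^{(n'²)}. -/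

import Mathlib

open Matrix

/-- A context-free grammar in Chomsky normal form. -/
structure CNF (N α : Type) where
  bin : N → N → N → Prop
  ter : N → α → Prop
  start : N

/-- Derivation trees of a CNF grammar rooted at a given nonterminal, yielding a
given string. -/
inductive Deriv {N α : Type} (G : CNF N α) : N → List α → Type
  | leaf {i : N} {s : α} : G.ter i s → Deriv G i [s]
  | node {i j k : N} {w₁ w₂ : List α} :
      G.bin i j k → w₁ ≠ [] → w₂ ≠ [] →
      Deriv G j w₁ → Deriv G k w₂ → Deriv G i (w₁ ++ w₂)

namespace DerivAux

variable {n : ℕ} {α : Type} (G : CNF (Fin n) α)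

structure NodeData (i : Fin n) (w : List α) where
  j : Fin n
  k : Fin n
  w₁ : List α
  w₂ : List α
  b : G.bin i j k
  h1 : w₁ ≠ []
  h2 : w₂ ≠ []
  d1 : Deriv G j w₁
  d2 : Deriv G k w₂
  hw : w₁ ++ w₂ = w

variable {G}

def toNode {i : Fin n} : ∀ {w : List α}, 2 ≤ w.length → Deriv G i w → NodeData G i w
  | _, hw, .leaf _ => absurd hw (by simp)
  | _, _, .node b h1 h2 d1 d2 => ⟨_, _, _, _, b, h1, h2, d1, d2, rfl⟩

def ofNode {i : Fin n} {w : List α} (nd : NodeData G i w) : Deriv G i w :=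
  nd.hw ▸ Deriv.node nd.b nd.h1 nd.h2 nd.d1 nd.d2

def derivNodeEquiv {i : Fin n} {w : List α} (hw : 2 ≤ w.length) :
    Deriv G i w ≃ NodeData G i w where
  toFun := toNode hw
  invFun := ofNode
  left_inv d := by
    cases d with
    | leaf h => simp at hw
    | node b h1 h2 d1 d2 => rfl
  right_inv nd := by
    obtain ⟨j, k, w₁, w₂, b, h1, h2, d1, d2, hweq⟩ := nd
    subst hweq
    rfl

end DerivAux

namespace DerivAux

variable {n : ℕ} {α : Type} (G : CNF (Fin n) α)

def SplitTy (i : Fin n) (w : List α) : Type :=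
  Σ (m : (Finset.Ico 1 w.length)) (jk : Fin n × Fin n),
    PLift (G.bin i jk.1 jk.2) × Deriv G jk.1 (w.take (m : ℕ)) × Deriv G jk.2 (w.drop (m : ℕ))

variable {G}

def nodeToSplit {i : Fin n} {w : List α} : NodeData G i w → SplitTy G i w
  | ⟨j, k, w₁, w₂, b, h1, h2, d1, d2, hw⟩ =>
    ⟨⟨w₁.length, by
        rw [Finset.mem_Ico]
        have p1 : 0 < w₁.length := List.length_pos_iff.2 h1
        have p2 : 0 < w₂.length := List.length_pos_iff.2 h2
        have hlen := congrArg List.length hw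
        rw [List.length_append] at hlen
        omega⟩,
      (j, k), ⟨b⟩,
      cast (congrArg (Deriv G j) (by
        show w₁ = List.take w₁.length w
        conv_rhs => rw [← hw]
        exact List.take_left.symm)) d1,
      cast (congrArg (Deriv G k) (by
        show w₂ = List.drop w₁.length w
        conv_rhs => rw [← hw]
        exact List.drop_left.symm)) d2⟩

def splitToNode {i : Fin n} {w : List α} (x : SplitTy G i w) : NodeData G i w :=
  ⟨x.2.1.1, x.2.1.2, w.take (x.1 : ℕ), w.drop (x.1 : ℕ), x.2.2.1.down,
    by
      have hm := x.1.2
      rw [Finset.mem_Ico] at hm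
      apply List.ne_nil_of_length_pos
      rw [List.length_take]; omega,
    by
      have hm := x.1.2
      rw [Finset.mem_Ico] at hm
      apply List.ne_nil_of_length_pos
      rw [List.length_drop]; omega,
    x.2.2.2.1, x.2.2.2.2, List.take_append_drop _ w⟩

private lemma node_mk_cast {i j k : Fin n} {w₁ w₁' w₂ w₂' : List α}
    (e1 : w₁ = w₁') (e2 : w₂ = w₂') (b : G.bin i j k) (h1 : w₁ ≠ []) (h2 : w₂ ≠ [])
    (h1' : w₁' ≠ []) (h2' : w₂' ≠ [])
    (d1 : Deriv G j w₁) (d2 : Deriv G k w₂) (hw : w₁' ++ w₂' = w₁ ++ w₂) :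
    (⟨j, k, w₁', w₂', b, h1', h2',
      cast (congrArg (Deriv G j) e1) d1, cast (congrArg (Deriv G k) e2) d2, hw⟩ :
        NodeData G i (w₁ ++ w₂)) = ⟨j, k, w₁, w₂, b, h1, h2, d1, d2, rfl⟩ := by
  subst e1; subst e2; rfl

private lemma split_mk_cast {i : Fin n} {w : List α} {m m' : ℕ} (h : m' = m)
    (hm : m ∈ Finset.Ico 1 w.length) (hm' : m' ∈ Finset.Ico 1 w.length)
    (jk : Fin n × Fin n) (b : PLift (G.bin i jk.1 jk.2))
    (d1 : Deriv G jk.1 (w.take m)) (d2 : Deriv G jk.2 (w.drop m))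
    (e1 : w.take m = w.take m') (e2 : w.drop m = w.drop m') :
    (⟨⟨m', hm'⟩, jk, b, cast (congrArg (Deriv G jk.1) e1) d1,
        cast (congrArg (Deriv G jk.2) e2) d2⟩ : SplitTy G i w) =
      ⟨⟨m, hm⟩, jk, b, d1, d2⟩ := by
  subst h; rfl

def nodeSplitEquiv {i : Fin n} {w : List α} : NodeData G i w ≃ SplitTy G i w where
  toFun := nodeToSplit
  invFun := splitToNode
  left_inv nd := by
    obtain ⟨j, k, w₁, w₂, b, h1, h2, d1, d2, hweq⟩ := nd
    subst hweq
    exact node_mk_cast (List.take_left (l₁ := w₁) (l₂ := w₂)).symm (List.drop_left (l₁ := w₁) (l₂ := w₂)).symm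
      b h1 h2 _ _ d1 d2 _
  right_inv x := by
    obtain ⟨⟨m, hm⟩, jk, b, d1, d2⟩ := x
    have hm' := hm
    rw [Finset.mem_Ico] at hm'
    have hlen : (w.take m).length = m := by
      rw [List.length_take]; omega
    exact split_mk_cast hlen hm _ jk b d1 d2
      (by rw [hlen]) (by rw [hlen])
  end DerivAux

namespace DerivAux

open scoped Classical

variable {n : ℕ} {α : Type} {G : CNF (Fin n) α}

lemma deriv_ne_nil {i : Fin n} : ∀ {w : List α}, Deriv G i w → w ≠ [] := by
  intro w d
  cases d with
  | leaf h => simp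
  | node b h1 h2 d1 d2 => simp [h1]

lemma deriv_nil_isEmpty (i : Fin n) : IsEmpty (Deriv G i ([] : List α)) :=
  ⟨fun d => deriv_ne_nil d rfl⟩

lemma deriv_singleton_eq_leaf {i : Fin n} {s : α} (d : Deriv G i [s]) :
    ∃ h : G.ter i s, d = Deriv.leaf h := by
  have key : ∀ (w : List α) (d : Deriv G i w) (e : w = [s]),
      ∃ h : G.ter i s, HEq d (Deriv.leaf (G := G) h) := by
    intro w d e
    cases d with
    | leaf h =>
      rename_i t
      obtain rfl : t = s := by simpa using e
      exact ⟨h, HEq.rfl⟩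
    | node b h1 h2 da db =>
      rename_i j k w₁ w₂
      exfalso
      have := congrArg List.length e
      have p1 : 0 < w₁.length := List.length_pos_iff.2 h1
      have p2 : 0 < w₂.length := List.length_pos_iff.2 h2
      simp [List.length_append] at this
      omega
  obtain ⟨h, hh⟩ := key [s] d rfl
  exact ⟨h, eq_of_heq hh⟩

lemma deriv_singleton_subsingleton (i : Fin n) (s : α) :
    Subsingleton (Deriv G i [s]) := by
  constructor
  intro d1 d2
  obtain ⟨h1, rfl⟩ := deriv_singleton_eq_leaf d1
  obtain ⟨h2, rfl⟩ := deriv_singleton_eq_leaf d2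
  rfl

def derivEquivSplit {i : Fin n} {w : List α} (hw : 2 ≤ w.length) :
    Deriv G i w ≃ SplitTy G i w :=
  (derivNodeEquiv hw).trans nodeSplitEquiv

lemma derivFinite : ∀ (w : List α) (i : Fin n), Finite (Deriv G i w) := by
  have key : ∀ (L : ℕ) (w : List α), w.length ≤ L → ∀ i, Finite (Deriv G i w) := by
    intro L
    induction L with
    | zero =>
      intro w hw i
      obtain rfl : w = [] := List.length_eq_zero_iff.1 (Nat.le_zero.1 hw)
      haveI := deriv_nil_isEmpty (G := G) i
      exact Finite.of_subsingleton
    | succ L IH =>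
      intro w hw i
      rcases w with _ | ⟨a, _ | ⟨b, t⟩⟩
      · haveI := deriv_nil_isEmpty (G := G) i
        exact Finite.of_subsingleton
      · haveI := deriv_singleton_subsingleton (G := G) i a
        exact Finite.of_subsingleton
      · set w : List α := a :: b :: t with hwdef
        have hw2 : 2 ≤ w.length := by simp [hwdef]
        haveI : ∀ (m : (Finset.Ico 1 w.length)) (jk : Fin n × Fin n),
            Finite (PLift (G.bin i jk.1 jk.2) × Deriv G jk.1 (w.take (m : ℕ)) ×
              Deriv G jk.2 (w.drop (m : ℕ))) := by
          intro m jk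
          have hm := m.2
          rw [Finset.mem_Ico] at hm
          haveI h1 : Finite (Deriv G jk.1 (w.take (m : ℕ))) := by
            apply IH
            rw [List.length_take]
            omega
          haveI h2 : Finite (Deriv G jk.2 (w.drop (m : ℕ))) := by
            apply IH
            rw [List.length_drop]
            omega
          infer_instance
        haveI : Finite (SplitTy G i w) := inferInstanceAs (Finite
          (Σ (m : (Finset.Ico 1 w.length)) (jk : Fin n × Fin n),
            PLift (G.bin i jk.1 jk.2) × Deriv G jk.1 (w.take (m : ℕ)) ×
              Deriv G jk.2 (w.drop (m : ℕ))))
        exact Finite.of_equiv _ (derivEquivSplit hw2).symm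
  exact fun w i => key w.length w le_rfl i

lemma nat_card_sigma {ι : Type} [Fintype ι] (f : ι → Type) [∀ i, Finite (f i)] :
    Nat.card (Σ i, f i) = ∑ i, Nat.card (f i) := by
  letI : ∀ i, Fintype (f i) := fun i => Fintype.ofFinite _
  simp [Nat.card_eq_fintype_card, Fintype.card_sigma]

lemma card_prop_plift (P : Prop) : Nat.card (PLift P) = if P then 1 else 0 := by
  by_cases h : P
  · rw [if_pos h]
    haveI : Nonempty (PLift P) := ⟨⟨h⟩⟩
    exact Nat.card_unique
  · rw [if_neg h]
    haveI : IsEmpty (PLift P) := ⟨fun x => h x.down⟩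
    exact Nat.card_of_isEmpty

lemma card_nil (i : Fin n) : Nat.card (Deriv G i ([] : List α)) = 0 :=
  @Nat.card_of_isEmpty _ (deriv_nil_isEmpty i)

lemma card_singleton (i : Fin n) (s : α) :
    Nat.card (Deriv G i [s]) = if G.ter i s then 1 else 0 := by
  by_cases h : G.ter i s
  · rw [if_pos h]
    haveI := deriv_singleton_subsingleton (G := G) i s
    haveI : Nonempty (Deriv G i [s]) := ⟨Deriv.leaf h⟩
    exact Nat.card_unique
  · rw [if_neg h]
    haveI : IsEmpty (Deriv G i [s]) := ⟨fun d => by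
      obtain ⟨h', _⟩ := deriv_singleton_eq_leaf d
      exact h h'⟩
    exact Nat.card_of_isEmpty

lemma card_rec {i : Fin n} {w : List α} (hw : 2 ≤ w.length) :
    Nat.card (Deriv G i w) =
      ∑ m ∈ Finset.Ico 1 w.length, ∑ jk : Fin n × Fin n,
        (if G.bin i jk.1 jk.2 then 1 else 0) *
          (Nat.card (Deriv G jk.1 (w.take m)) * Nat.card (Deriv G jk.2 (w.drop m))) := by
  haveI : ∀ (v : List α) (j : Fin n), Finite (Deriv G j v) := fun v j => derivFinite v j
  rw [Nat.card_congr (derivEquivSplit hw)]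
  rw [show (SplitTy G i w) = (Σ (m : (Finset.Ico 1 w.length)) (jk : Fin n × Fin n),
    PLift (G.bin i jk.1 jk.2) × Deriv G jk.1 (w.take (m : ℕ)) × Deriv G jk.2 (w.drop (m : ℕ)))
    from rfl]
  rw [nat_card_sigma]
  rw [← Finset.sum_coe_sort (Finset.Ico 1 w.length)]
  refine Finset.sum_congr rfl fun m _ => ?_
  rw [nat_card_sigma]
  refine Finset.sum_congr rfl fun jk _ => ?_
  rw [Nat.card_prod, Nat.card_prod, card_prop_plift]

end DerivAux

/-- The composition tensor `T` of an HMM (cf. `vec(AB) = T₁·(vec A ⊗ vec B)`). -/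
def Thmm (n : ℕ) : (Fin n × Fin n) → (Fin n × Fin n) → (Fin n × Fin n) → ℝ :=
  fun p q r => if p.1 = q.1 ∧ p.2 = r.2 ∧ q.2 = r.1 then 1 else 0

/-- The forward vector `β_{G,A'}^{(L)} = Σ_{w ∈ Σ^L} β_G(w) ⊗ vec(A'_w)`. -/
noncomputable def betaGA {n n' : ℕ} {α : Type} [Fintype α] (G : CNF (Fin n) α)
    (A : α → Matrix (Fin n') (Fin n') ℝ) (L : ℕ) :
    Fin n × (Fin n' × Fin n') → ℝ :=
  fun p => ∑ w : Fin L → α,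
    (Nat.card (Deriv G p.1 (List.ofFn w)) : ℝ) *
      ((List.ofFn w).map A).prod p.2.1 p.2.2

namespace DerivAux

variable {n n' : ℕ} {α : Type} [Fintype α] {G : CNF (Fin n) α}

lemma split_sum (m k : ℕ) (F : List α → List α → ℝ) :
    ∑ w : Fin (m + k) → α, F ((List.ofFn w).take m) ((List.ofFn w).drop m)
      = ∑ u : Fin m → α, ∑ v : Fin k → α, F (List.ofFn u) (List.ofFn v) := by
  rw [← Equiv.sum_comp (Fin.appendEquiv m k)
    (fun w => F ((List.ofFn w).take m) ((List.ofFn w).drop m))]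
  rw [Fintype.sum_prod_type]
  refine Finset.sum_congr rfl fun u _ => Finset.sum_congr rfl fun v _ => ?_
  show F ((List.ofFn (Fin.appendEquiv m k (u, v))).take m)
      ((List.ofFn (Fin.appendEquiv m k (u, v))).drop m) = _
  have h1 : List.ofFn (Fin.appendEquiv m k (u, v)) = List.ofFn u ++ List.ofFn v :=
    List.ofFn_fin_append u v
  rw [h1, List.take_left' (by simp), List.drop_left' (by simp)]

lemma thmm_sum (a b : Fin n') (X Y : Fin n' × Fin n' → ℝ) :
    ∑ q : Fin n' × Fin n', ∑ r : Fin n' × Fin n', Thmm n' (a, b) q r * (X q * Y r)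
      = ∑ t : Fin n', X (a, t) * Y (t, b) := by
  simp only [Thmm, Fintype.sum_prod_type, ite_mul, one_mul, zero_mul, ite_and]
  simp [Finset.sum_ite_eq, Finset.sum_ite_eq']

open scoped Classical in
lemma per_m (A : α → Matrix (Fin n') (Fin n') ℝ) (i : Fin n) (a b : Fin n')
    (m k : ℕ) :
    ∑ w : Fin (m + k) → α, ∑ jk : Fin n × Fin n,
      ((if G.bin i jk.1 jk.2 then (1 : ℝ) else 0) *
        ((Nat.card (Deriv G jk.1 ((List.ofFn w).take m)) : ℝ) *
          (Nat.card (Deriv G jk.2 ((List.ofFn w).drop m)) : ℝ))) *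
        ((List.ofFn w).map A).prod a b
    = ∑ jk : Fin n × Fin n, ∑ q : Fin n' × Fin n', ∑ r : Fin n' × Fin n',
        ((if G.bin i jk.1 jk.2 then (1 : ℝ) else 0) * Thmm n' (a, b) q r) *
          (betaGA G A m (jk.1, q) * betaGA G A k (jk.2, r)) := by
  rw [Finset.sum_comm]
  refine Finset.sum_congr rfl fun jk _ => ?_
  by_cases hb : G.bin i jk.1 jk.2
  · simp only [if_pos hb, one_mul]
    rw [thmm_sum a b (fun q => betaGA G A m (jk.1, q)) (fun r => betaGA G A k (jk.2, r))]
    have key : ∀ w : Fin (m + k) → α,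
        ((List.ofFn w).map A).prod a b =
          ∑ t : Fin n', (((List.ofFn w).take m).map A).prod a t *
            (((List.ofFn w).drop m).map A).prod t b := by
      intro w
      conv_lhs => rw [← List.take_append_drop m (List.ofFn w)]
      rw [List.map_append, List.prod_append, Matrix.mul_apply]
    calc ∑ w : Fin (m + k) → α,
          ((Nat.card (Deriv G jk.1 ((List.ofFn w).take m)) : ℝ) *
            (Nat.card (Deriv G jk.2 ((List.ofFn w).drop m)) : ℝ)) *
            ((List.ofFn w).map A).prod a b
        = ∑ t : Fin n', ∑ w : Fin (m + k) → α,
            ((Nat.card (Deriv G jk.1 ((List.ofFn w).take m)) : ℝ) *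
              (((List.ofFn w).take m).map A).prod a t) *
            ((Nat.card (Deriv G jk.2 ((List.ofFn w).drop m)) : ℝ) *
              (((List.ofFn w).drop m).map A).prod t b) := by
          rw [Finset.sum_comm]
          refine Finset.sum_congr rfl fun w _ => ?_
          rw [key w, Finset.mul_sum]
          refine Finset.sum_congr rfl fun t _ => ?_
          ring
      _ = ∑ t : Fin n', betaGA G A m (jk.1, (a, t)) * betaGA G A k (jk.2, (t, b)) := by
          refine Finset.sum_congr rfl fun t _ => ?_
          rw [split_sum m k (fun u v =>
            ((Nat.card (Deriv G jk.1 u) : ℝ) * (u.map A).prod a t) *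
              ((Nat.card (Deriv G jk.2 v) : ℝ) * (v.map A).prod t b))]
          rw [← Finset.sum_mul_sum]
          rfl
  · simp [hb]

end DerivAux

open scoped Classical in
/-- The recursion for the forward vectors:
`β^{(1)} = Σ_σ β_σ ⊗ vec(A'_σ)` and for `L ≥ 2`,
`β^{(L)} = (M ⊗ T)₁ · P · Σ_{i=1}^{L-1} β^{(i)} ⊗ β^{(L-i)}`, stated entrywise
(the permutation `P` reorders `(j,q,k,r)` into `(j,k,q,r)`). -/
theorem stmt7 {n n' : ℕ} {α : Type} [Fintype α] (G : CNF (Fin n) α)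
    (hU : ∀ w : List α, Nat.card (Deriv G G.start w) ≤ 1)
    (π' : Fin n' → ℝ) (A : α → Matrix (Fin n') (Fin n') ℝ)
    (hπ0 : ∀ i, 0 ≤ π' i) (hπ1 : ∑ i, π' i = 1)
    (hA0 : ∀ s i j, 0 ≤ A s i j)
    (hstoch : ∀ i, ∑ s : α, ∑ j, A s i j = 1) :
    (∀ p : Fin n × (Fin n' × Fin n'),
      betaGA G A 1 p =
        ∑ s : α, (if G.ter p.1 s then (1 : ℝ) else 0) * A s p.2.1 p.2.2) ∧
    (∀ L : ℕ, 2 ≤ L → ∀ p : Fin n × (Fin n' × Fin n'),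
      betaGA G A L p =
        ∑ m ∈ Finset.Ico 1 L,
          ∑ jk : Fin n × Fin n, ∑ q : Fin n' × Fin n', ∑ r : Fin n' × Fin n',
            ((if G.bin p.1 jk.1 jk.2 then (1 : ℝ) else 0) * Thmm n' p.2 q r) *
              (betaGA G A m (jk.1, q) * betaGA G A (L - m) (jk.2, r))) := by
  constructor
  · intro p
    rw [betaGA]
    refine Fintype.sum_equiv (Equiv.funUnique (Fin 1) α) _ _ fun w => ?_
    have hw : List.ofFn w = [w 0] := by
      simp [List.ofFn_succ]
    rw [hw, DerivAux.card_singleton]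
    simp [Equiv.funUnique]
  · intro L hL p
    rw [betaGA]
    have step1 : ∑ w : Fin L → α,
        (Nat.card (Deriv G p.1 (List.ofFn w)) : ℝ) *
          ((List.ofFn w).map A).prod p.2.1 p.2.2
        = ∑ w : Fin L → α, ∑ m ∈ Finset.Ico 1 L, ∑ jk : Fin n × Fin n,
            ((if G.bin p.1 jk.1 jk.2 then (1 : ℝ) else 0) *
              ((Nat.card (Deriv G jk.1 ((List.ofFn w).take m)) : ℝ) *
                (Nat.card (Deriv G jk.2 ((List.ofFn w).drop m)) : ℝ))) *
            ((List.ofFn w).map A).prod p.2.1 p.2.2 := by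
      refine Finset.sum_congr rfl fun w _ => ?_
      rw [DerivAux.card_rec (by simp; omega)]
      simp only [List.length_ofFn]
      push_cast
      rw [Finset.sum_mul]
      refine Finset.sum_congr rfl fun m _ => ?_
      rw [Finset.sum_mul]
    rw [step1, Finset.sum_comm]
    refine Finset.sum_congr rfl fun m hm => ?_
    rw [Finset.mem_Ico] at hm
    obtain ⟨k, rfl⟩ : ∃ k, L = m + k := ⟨L - m, by omega⟩
    rw [Nat.add_sub_cancel_left]
    have := DerivAux.per_m (G := G) A p.1 p.2.1 p.2.2 m k
    simpa using this
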